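/- Let $K = \mathbb{C}[\sigma]/(\sigma^m)$ for $m \geq 1$. Define $\gamma_1 \circ \gamma_2 := (\gamma_1 + \gamma_2) \cdot (1 + \sigma \gamma_1 \gamma_2)^{-1}$ (note $1 + \sigma\gamma_1\gamma_2$ is a unit since $\sigma$ is nilpotent). Then $(K, \circ)$ is an abelian group with identity element $0$. -/

import Mathlib

open Polynomial

/-- Let `K = ℂ[σ]/(σ^m)` for `m ≥ 1` and let `σ` denote the class of the variable.
The operation `γ₁ ∘ γ₂ := (γ₁ + γ₂) * (1 + σ γ₁ γ₂)⁻¹` (where `1 + σ γ₁ γ₂` is a unit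
since `σ` is nilpotent) makes `K` into an abelian group with identity element `0`. -/
theorem cuspidal_group_law_abelian_group
    (m : ℕ) (hm : 1 ≤ m)
    (σ : Polynomial ℂ ⧸ Ideal.span {(X : Polynomial ℂ) ^ m})
    (hσ : σ = Ideal.Quotient.mk (Ideal.span {(X : Polynomial ℂ) ^ m}) X)
    (op : (Polynomial ℂ ⧸ Ideal.span {(X : Polynomial ℂ) ^ m}) →
      (Polynomial ℂ ⧸ Ideal.span {(X : Polynomial ℂ) ^ m}) →
      (Polynomial ℂ ⧸ Ideal.span {(X : Polynomial ℂ) ^ m}))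
    (hop : ∀ γ₁ γ₂, op γ₁ γ₂ = (γ₁ + γ₂) * Ring.inverse (1 + σ * γ₁ * γ₂)) :
    (∀ γ₁ γ₂, IsUnit (1 + σ * γ₁ * γ₂)) ∧
    (∀ γ₁ γ₂, op γ₁ γ₂ = op γ₂ γ₁) ∧
    (∀ γ₁ γ₂ γ₃, op (op γ₁ γ₂) γ₃ = op γ₁ (op γ₂ γ₃)) ∧
    (∀ γ, op γ 0 = γ) ∧ (∀ γ, op 0 γ = γ) ∧
    (∀ γ, op γ (-γ) = 0) := by
  have hσm : σ ^ m = 0 := by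
    rw [hσ, ← map_pow]
    exact Ideal.Quotient.eq_zero_iff_mem.mpr (Ideal.subset_span rfl)
  have hnil : IsNilpotent σ := ⟨m, hσm⟩
  have hu : ∀ x, IsUnit (1 + σ * x) := fun x =>
    IsNilpotent.isUnit_one_add ((Commute.all σ x).isNilpotent_mul_right hnil)
  have hu2 : ∀ a b, IsUnit (1 + σ * a * b) := fun a b => by
    rw [mul_assoc]; exact hu _
  have key : ∀ a b, op a b * (1 + σ * a * b) = a + b := fun a b => by
    rw [hop, mul_assoc, Ring.inverse_mul_cancel _ (hu2 a b), mul_one]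
  refine ⟨hu2, ?_, ?_, ?_, ?_, ?_⟩
  · intro a b
    rw [hop, hop, show σ * b * a = σ * a * b from by ring, add_comm b a]
  · intro a b c
    have hD : IsUnit (1 + σ * (a * b + a * c + b * c)) := hu _
    have k1 := key a b
    have k2 := key (op a b) c
    have k3 := key b c
    have k4 := key a (op b c)
    apply hD.mul_left_cancel
    rw [mul_comm _ (op (op a b) c), mul_comm _ (op a (op b c))]
    have e1 : op (op a b) c * (1 + σ * (a * b + a * c + b * c)) =
        a + b + c + σ * (a * b * c) := by
      linear_combination (1 + σ * a * b) * k2 +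
        (1 - σ * (op (op a b) c) * c) * k1
    have e2 : op a (op b c) * (1 + σ * (a * b + a * c + b * c)) =
        a + b + c + σ * (a * b * c) := by
      linear_combination (1 + σ * b * c) * k4 +
        (1 - σ * (op a (op b c)) * a) * k3
    rw [e1, e2]
  · intro γ; rw [hop]; simp
  · intro γ; rw [hop]; simp
  · intro γ; rw [hop]; simp
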